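/- Let Σ = {a,ā,b,b̄,c,c̄}, k ≥ 1, α = a^k, w = αbαᾱαcᾱ, u = b̄ᾱ, v = αᾱb̄ᾱ, and R = w·u⁺·v·ū⁺·w̄·ū⁺·w̄. Then the intersection of R with the iterated (unbounded, two-sided) k-hairpin completion of {w} equals { w·u^r·v·ū^r·w̄·ū^r·w̄ : r ≥ 1 }. -/

import Mathlib

open Computability

/-- Reverse-complement of a word under the involution `bar`. -/
def wbar {S : Type} (bar : S → S) (w : List S) : List S := (w.map bar).reverse

/-- The set of `α`-prefixes of `w` of length at most `ℓ`. -/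
def Pa {S : Type} (α w : List S) (ℓ : ℕ) : Language S :=
  {v | v ++ α <+: w ∧ v.length ≤ ℓ}

/-- `α Σ* ᾱ` : words with prefix `α` and suffix `ᾱ`. -/
def Dom {S : Type} (bar : S → S) (α : List S) : Language S :=
  {z | ∃ β, z = α ++ β ++ wbar bar α}

/-- One-step parameterized hairpin completion with binding word `α`,
left bound `ℓ`, right bound `r`. -/
def HaP {S : Type} (bar : S → S) (α : List S) (ℓ r : ℕ) (L : Language S) : Language S :=
  {z | ∃ γ β, γ.length ≤ ℓ ∧ z = γ ++ α ++ β ++ wbar bar α ++ wbar bar γ ∧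
      α ++ β ++ wbar bar α ++ wbar bar γ ∈ L} ⊔
  {z | ∃ γ β, γ.length ≤ r ∧ z = γ ++ α ++ β ++ wbar bar α ++ wbar bar γ ∧
      γ ++ α ++ β ++ wbar bar α ∈ L}

/-- One-step parameterized hairpin completion `H_k(L,ℓ,r)`. -/
def HkP {S : Type} (bar : S → S) (k ℓ r : ℕ) (L : Language S) : Language S :=
  {z | ∃ α : List S, α.length = k ∧ z ∈ HaP bar α ℓ r L}

def HaIter {S : Type} (bar : S → S) (α : List S) (ℓ r : ℕ) (L : Language S) : ℕ → Language S
  | 0 => L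
  | n + 1 => HaP bar α ℓ r (HaIter bar α ℓ r L n)

/-- Iterated parameterized hairpin completion `H_α*(L,ℓ,r)`. -/
def HaStar {S : Type} (bar : S → S) (α : List S) (ℓ r : ℕ) (L : Language S) : Language S :=
  {z | ∃ n, z ∈ HaIter bar α ℓ r L n}

def HkIter {S : Type} (bar : S → S) (k ℓ r : ℕ) (L : Language S) : ℕ → Language S
  | 0 => L
  | n + 1 => HkP bar k ℓ r (HkIter bar k ℓ r L n)

/-- Iterated parameterized hairpin completion `H_k*(L,ℓ,r)`. -/
def HkStar {S : Type} (bar : S → S) (k ℓ r : ℕ) (L : Language S) : Language S :=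
  {z | ∃ n, z ∈ HkIter bar k ℓ r L n}

/-- Unbounded two-sided hairpin completion `H_k(L)`. -/
def HU {S : Type} (bar : S → S) (k : ℕ) (L : Language S) : Language S :=
  {z | ∃ γ α β, α.length = k ∧ z = γ ++ α ++ β ++ wbar bar α ++ wbar bar γ ∧
      (α ++ β ++ wbar bar α ++ wbar bar γ ∈ L ∨ γ ++ α ++ β ++ wbar bar α ∈ L)}

/-- Unbounded right-sided hairpin completion `RH_k(L)`. -/
def RHU {S : Type} (bar : S → S) (k : ℕ) (L : Language S) : Language S :=
  {z | ∃ γ α β, α.length = k ∧ z = γ ++ α ++ β ++ wbar bar α ++ wbar bar γ ∧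
      γ ++ α ++ β ++ wbar bar α ∈ L}

def HUIter {S : Type} (bar : S → S) (k : ℕ) (L : Language S) : ℕ → Language S
  | 0 => L
  | n + 1 => HU bar k (HUIter bar k L n)

/-- Iterated unbounded two-sided hairpin completion `H_k*(L)`. -/
def HUStar {S : Type} (bar : S → S) (k : ℕ) (L : Language S) : Language S :=
  {z | ∃ n, z ∈ HUIter bar k L n}

def RHUIter {S : Type} (bar : S → S) (k : ℕ) (L : Language S) : ℕ → Language S
  | 0 => L
  | n + 1 => RHU bar k (RHUIter bar k L n)

/-- Iterated unbounded right-sided hairpin completion `RH_k*(L)`. -/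
def RHUStar {S : Type} (bar : S → S) (k : ℕ) (L : Language S) : Language S :=
  {z | ∃ n, z ∈ RHUIter bar k L n}

/-- Image of a language under reverse-complement. -/
def barSet {S : Type} (bar : S → S) (A : Language S) : Language S := wbar bar '' A

/-- The alphabet `Σ = {a, ā, b, b̄, c, c̄}`. -/
inductive HpAb : Type
  | a | abar | b | bbar | c | cbar
deriving DecidableEq

/-- The involution pairing `a ↔ ā`, `b ↔ b̄`, `c ↔ c̄`. -/
def HpAb.inv : HpAb → HpAb
  | .a => .abar
  | .abar => .a
  | .b => .bbar
  | .bbar => .b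
  | .c => .cbar
  | .cbar => .c

/-- The language `L = c · {ā,b̄}* · a^k · ā^k`. -/
def LHp (k : ℕ) : Language HpAb :=
  {z | ∃ v : List HpAb, (∀ x ∈ v, x = HpAb.abar ∨ x = HpAb.bbar) ∧
    z = HpAb.c :: (v ++ List.replicate k HpAb.a ++ List.replicate k HpAb.abar)}

/-- `u^n`: the `n`-fold concatenation of the word `u`. -/
def wpow {S : Type} (u : List S) (n : ℕ) : List S := (List.replicate n u).flatten

/-- `α = a^k`. -/
def alHp (k : ℕ) : List HpAb := List.replicate k HpAb.a

/-- `w = α b α ᾱ α c ᾱ`. -/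
def wHp (k : ℕ) : List HpAb :=
  alHp k ++ [HpAb.b] ++ alHp k ++ wbar HpAb.inv (alHp k) ++ alHp k ++ [HpAb.c]
    ++ wbar HpAb.inv (alHp k)

/-- `u = b̄ ᾱ`. -/
def uHp (k : ℕ) : List HpAb := HpAb.bbar :: wbar HpAb.inv (alHp k)

/-- `v = α ᾱ b̄ ᾱ`. -/
def vHp (k : ℕ) : List HpAb :=
  alHp k ++ wbar HpAb.inv (alHp k) ++ [HpAb.bbar] ++ wbar HpAb.inv (alHp k)


namespace HpAux
open HpAb List


/-! ### basic `wbar` lemmas -/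

theorem inv_inv (x : HpAb) : x.inv.inv = x := by cases x <;> rfl

theorem inv_comp : HpAb.inv ∘ HpAb.inv = id := funext inv_inv

theorem wbar_append (u v : List HpAb) :
    wbar HpAb.inv (u ++ v) = wbar HpAb.inv v ++ wbar HpAb.inv u := by
  simp [wbar]

theorem wbar_nil : wbar HpAb.inv ([] : List HpAb) = [] := rfl

theorem wbar_cons (x : HpAb) (u : List HpAb) :
    wbar HpAb.inv (x :: u) = wbar HpAb.inv u ++ [x.inv] := by
  simp [wbar]

theorem wbar_singleton (x : HpAb) : wbar HpAb.inv [x] = [x.inv] := rfl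

theorem wbar_wbar (u : List HpAb) : wbar HpAb.inv (wbar HpAb.inv u) = u := by
  simp [wbar, List.map_reverse, List.map_map, inv_comp]

theorem wbar_replicate (n : ℕ) (x : HpAb) :
    wbar HpAb.inv (List.replicate n x) = List.replicate n x.inv := by
  simp [wbar, List.map_replicate, List.reverse_replicate]

theorem wbar_length (u : List HpAb) : (wbar HpAb.inv u).length = u.length := by
  simp [wbar]

theorem wbar_inj {u v : List HpAb} (h : wbar HpAb.inv u = wbar HpAb.inv v) : u = v := by
  have := congrArg (wbar HpAb.inv) h
  rwa [wbar_wbar, wbar_wbar] at this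

theorem wbar_prefix_iff {u v : List HpAb} :
    wbar HpAb.inv u <+: wbar HpAb.inv v ↔ u <:+ v := by
  constructor
  · rintro ⟨r, hr⟩
    have h2 : wbar HpAb.inv r ++ u = wbar HpAb.inv (wbar HpAb.inv v) := by
      rw [← wbar_wbar u, ← wbar_append, hr]
    rw [wbar_wbar] at h2
    exact ⟨wbar HpAb.inv r, h2⟩
  · rintro ⟨r, hr⟩
    exact ⟨wbar HpAb.inv r, by rw [← wbar_append, hr]⟩

/-! ### token decoding -/

/-- block of a token: `a ↦ a^k`, `ā ↦ ā^k`, others are single letters -/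
def blk (k : ℕ) : HpAb → List HpAb
  | .a => List.replicate k .a
  | .abar => List.replicate k .abar
  | x => [x]

def dec (k : ℕ) : List HpAb → List HpAb
  | [] => []
  | t :: L => blk k t ++ dec k L

@[simp] theorem dec_nil (k : ℕ) : dec k [] = [] := rfl

@[simp] theorem dec_cons (k : ℕ) (t : HpAb) (L : List HpAb) :
    dec k (t :: L) = blk k t ++ dec k L := rfl

theorem dec_append (k : ℕ) (L M : List HpAb) :
    dec k (L ++ M) = dec k L ++ dec k M := by
  induction L with
  | nil => rfl
  | cons t L ih => simp [dec, ih]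

theorem blk_wbar (k : ℕ) (t : HpAb) : wbar HpAb.inv (blk k t) = blk k t.inv := by
  cases t <;> simp [blk, wbar_replicate, HpAb.inv, wbar_singleton]

theorem dec_wbar (k : ℕ) (L : List HpAb) :
    dec k (wbar HpAb.inv L) = wbar HpAb.inv (dec k L) := by
  induction L with
  | nil => rfl
  | cons t L ih =>
      rw [wbar_cons, dec_append, ih]
      simp [dec, wbar_append, blk_wbar]

theorem blk_cons (k : ℕ) (hk : 1 ≤ k) (t : HpAb) :
    ∃ r, blk k t = t :: r := by
  obtain ⟨k, rfl⟩ := Nat.exists_eq_add_of_le hk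
  cases t <;> simp [blk, List.replicate_add, List.replicate_succ]

theorem dec_prefix (k : ℕ) (hk : 1 ≤ k) :
    ∀ {M L : List HpAb}, dec k M <+: dec k L → M <+: L := by
  intro M
  induction M with
  | nil => intro L _; exact L.nil_prefix
  | cons t M ih =>
      intro L h
      match L with
      | [] =>
          exfalso
          obtain ⟨r, hr⟩ := blk_cons k hk t
          have := h.eq_of_length (by simpa using h.length_le)
          simp [hr] at this
      | s :: L =>
          obtain ⟨rt, hrt⟩ := blk_cons k hk t
          obtain ⟨rs, hrs⟩ := blk_cons k hk s
          have hts : t = s := by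
            have h' := h
            rw [dec_cons, dec_cons, hrt, hrs] at h'
            exact (List.cons_prefix_cons.mp (by simpa using h')).1
          subst hts
          have h' := h
          rw [dec_cons, dec_cons, List.prefix_append_right_inj] at h'
          exact List.cons_prefix_cons.mpr ⟨rfl, ih h'⟩

theorem dec_suffix (k : ℕ) (hk : 1 ≤ k) {M L : List HpAb}
    (h : dec k M <:+ dec k L) : M <:+ L := by
  have h1 : wbar HpAb.inv (dec k M) <+: wbar HpAb.inv (dec k L) := wbar_prefix_iff.mpr h
  rw [← dec_wbar, ← dec_wbar] at h1
  exact wbar_prefix_iff.mp (dec_prefix k hk h1)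

theorem dec_inj (k : ℕ) (hk : 1 ≤ k) {M L : List HpAb}
    (h : dec k M = dec k L) : M = L := by
  have h1 : M <+: L := dec_prefix k hk (h ▸ List.prefix_refl _)
  have h2 : L <+: M := dec_prefix k hk (h ▸ List.prefix_refl _)
  exact h1.eq_of_length (le_antisymm h1.length_le h2.length_le)



/-! ### eating replicate blocks, and the cut lemma -/

theorem split_replicate {x e : HpAb} (hne : x ≠ e) :
    ∀ {n : ℕ} {y z w : List HpAb}, y ++ x :: z = List.replicate n e ++ w →
      ∃ y', y = List.replicate n e ++ y' ∧ y' ++ x :: z = w := by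
  intro n
  induction n with
  | zero => intro y z w h; exact ⟨y, by simp, by simpa using h⟩
  | succ n ih =>
      intro y z w h
      rw [List.replicate_succ] at h
      match y with
      | [] => simp at h; exact absurd h.1 hne
      | e' :: y =>
          rw [List.cons_append, List.cons_append] at h
          obtain ⟨he, h⟩ := List.cons_eq_cons.mp h
          obtain ⟨y', h1, h2⟩ := ih h
          exact ⟨y', by rw [List.replicate_succ, he, h1, List.cons_append], h2⟩

theorem eat_q {k : ℕ} (hk : 1 ≤ k) :
    ∀ {L s : List HpAb}, dec k L = List.replicate k HpAb.abar ++ s →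
      ∃ L2, L = HpAb.abar :: L2 ∧ s = dec k L2 := by
  intro L s h
  match L with
  | [] =>
      exfalso
      have := congrArg List.length h
      simp at this
      omega
  | t :: L2 =>
      obtain ⟨rt, hrt⟩ := blk_cons k hk t
      have ht : t = HpAb.abar := by
        obtain ⟨k', rfl⟩ : ∃ k', k = k' + 1 := ⟨k - 1, by omega⟩
        rw [dec_cons, hrt, List.replicate_succ, List.cons_append, List.cons_append] at h
        exact (List.cons_eq_cons.mp h).1
      subst ht
      refine ⟨L2, rfl, ?_⟩
      have hblk : blk k HpAb.abar = List.replicate k HpAb.abar := rfl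
      rw [dec_cons, hblk] at h
      exact (List.append_cancel_left h).symm

/-- The crucial cut lemma: an occurrence of `d :: ā^k` (`d ∈ {b̄, c}`) in a
token-decodable word must sit at a token boundary. -/
theorem cut {k : ℕ} (hk : 1 ≤ k) :
    ∀ (L : List HpAb) {y s : List HpAb} {d : HpAb}, (d = HpAb.bbar ∨ d = HpAb.c) →
    dec k L = y ++ d :: (List.replicate k HpAb.abar ++ s) →
    ∃ L1 L2, L = L1 ++ d :: HpAb.abar :: L2 ∧ y = dec k L1 ∧ s = dec k L2 := by
  intro L
  induction L with
  | nil => intro y s d _ h; simp [dec] at h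
  | cons t L ih =>
      intro y s d hd h
      have hda : d ≠ HpAb.a := by rcases hd with h | h <;> simp [h]
      have hdq : d ≠ HpAb.abar := by rcases hd with h | h <;> simp [h]
      by_cases hta : t = HpAb.a ∨ t = HpAb.abar
      · -- replicate-block token
        have hblk : blk k t = List.replicate k t := by
          rcases hta with rfl | rfl <;> rfl
        rw [dec_cons, hblk] at h
        have hdt : d ≠ t := by rcases hta with rfl | rfl; exacts [hda, hdq]
        obtain ⟨y', hy, h2⟩ := split_replicate hdt h.symm
        obtain ⟨L1, L2, hL, hy2, hs⟩ := ih hd h2.symm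
        exact ⟨t :: L1, L2, by rw [hL]; rfl, by rw [hy, hy2, dec_cons, hblk], hs⟩
      · -- single-letter token
        push_neg at hta
        have hblk : blk k t = [t] := by
          cases t <;> simp_all [blk]
        rw [dec_cons, hblk, List.singleton_append] at h
        match y with
        | [] =>
            rw [List.nil_append] at h
            obtain ⟨htd, h2⟩ := List.cons_eq_cons.mp h
            obtain ⟨L2, hL2, hs⟩ := eat_q hk h2
            exact ⟨[], L2, by rw [htd, hL2]; rfl, rfl, hs⟩
        | e :: y =>
            rw [List.cons_append] at h
            obtain ⟨hte, h2⟩ := List.cons_eq_cons.mp h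
            obtain ⟨L1, L2, hL, hy2, hs⟩ := ih hd h2
            exact ⟨t :: L1, L2, by rw [hL]; rfl,
              by rw [dec_cons, hblk, List.singleton_append, ← hte, hy2], hs⟩

/-! ### the invariant INV -/

/-- Every word in the iterated hairpin completion of `w` starts with
`a^k·{b,c̄}` and ends with `{b̄,c}·ā^k`. -/
def INV (k : ℕ) (x : List HpAb) : Prop :=
  (∃ d y, x = List.replicate k HpAb.a ++ d :: y ∧ (d = HpAb.b ∨ d = HpAb.cbar)) ∧
  (∃ d y, x = y ++ d :: List.replicate k HpAb.abar ∧ (d = HpAb.bbar ∨ d = HpAb.c))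

theorem INV_sym {k : ℕ} {x : List HpAb} (h : INV k x) : INV k (wbar HpAb.inv x) := by
  obtain ⟨⟨d1, y1, hx1, hd1⟩, ⟨d2, y2, hx2, hd2⟩⟩ := h
  constructor
  · refine ⟨d2.inv, wbar HpAb.inv y2, ?_, ?_⟩
    · rw [hx2, wbar_append, wbar_cons, wbar_replicate]
      have : HpAb.abar.inv = HpAb.a := rfl
      rw [this]
      simp
    · rcases hd2 with rfl | rfl
      · left; rfl
      · right; rfl
  · refine ⟨d1.inv, wbar HpAb.inv y1, ?_, ?_⟩
    · rw [hx1, wbar_append, wbar_cons, wbar_replicate]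
      have : HpAb.a.inv = HpAb.abar := rfl
      rw [this]
      simp
    · rcases hd1 with rfl | rfl
      · left; rfl
      · right; rfl

theorem small_prefix {u w : List HpAb} {n : ℕ} {e : HpAb}
    (h : u <+: List.replicate n e ++ w) (hl : u.length ≤ n) :
    u = List.replicate u.length e := by
  have h1 : u = (List.replicate n e ++ w).take u.length := by
    obtain ⟨r, hr⟩ := h
    rw [← hr, List.take_left']
    rfl
  rw [List.take_append_of_le_length (by simpa using hl), List.take_replicate,
    min_eq_left hl] at h1
  exact h1

theorem prefix_struct {u v1 v2 : List HpAb} (h : u <+: v1 ++ v2)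
    (hl : v1.length ≤ u.length) : ∃ u', u = v1 ++ u' ∧ u' <+: v2 := by
  obtain ⟨r, hr⟩ := h
  rcases List.append_eq_append_iff.mp hr.symm with ⟨a', h1, h2⟩ | ⟨c', h1, h2⟩
  · exact ⟨a', h1, ⟨r, h2.symm⟩⟩
  · have : c'.length = 0 := by
      have := congrArg List.length h1
      simp at this
      omega
    rw [List.length_eq_zero_iff.mp this, List.append_nil] at h1
    exact ⟨[], by simp [h1], v2.nil_prefix⟩

theorem INV_stepR {k : ℕ} (hk : 1 ≤ k) {x γ β : List HpAb} (hI : INV k x)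
    (hx : x = γ ++ List.replicate k HpAb.a ++ β ++ List.replicate k HpAb.abar) :
    INV k (x ++ wbar HpAb.inv γ) := by
  obtain ⟨⟨d1, y1, hx1, hd1⟩, hB⟩ := hI
  have hfront : INV k (x ++ wbar HpAb.inv γ) → True := fun _ => trivial
  rcases List.eq_nil_or_concat γ with rfl | ⟨γ', g, rfl⟩
  · simpa [wbar] using ⟨⟨d1, y1, hx1, hd1⟩, hB⟩
  · simp only [List.concat_eq_append] at hx ⊢
    set G : List HpAb := γ' ++ [g] with hG
    have hGne : G ≠ [] := by simp [hG]
    have hpre : G <+: x := ⟨List.replicate k HpAb.a ++ β ++ List.replicate k HpAb.abar,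
      by rw [hx]; simp [List.append_assoc]⟩
    by_cases hlen : G.length ≤ k
    · exfalso
      have hsmall : G = List.replicate G.length HpAb.a := by
        apply small_prefix (w := d1 :: y1) _ hlen
        rwa [← hx1]
      -- then x starts with a^(|G|+k), contradicting x = a^k d1 ...
      have h2 : List.replicate G.length HpAb.a ++ (List.replicate k HpAb.a ++
          (β ++ List.replicate k HpAb.abar)) = List.replicate k HpAb.a ++ d1 :: y1 := by
        rw [← hsmall, ← hx1, hx]
        simp [List.append_assoc]
      rw [← List.append_assoc, ← List.replicate_add, Nat.add_comm, List.replicate_add,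
        List.append_assoc] at h2
      have h3 := List.append_cancel_left h2
      obtain ⟨m, hm⟩ : ∃ m, G.length = m + 1 := ⟨G.length - 1, by
        have : G.length ≠ 0 := by simpa using hGne
        omega⟩
      rw [hm, List.replicate_succ, List.cons_append] at h3
      have := (List.cons_eq_cons.mp h3).1
      rcases hd1 with rfl | rfl <;> simp at this
    · push_neg at hlen
      obtain ⟨u', hu1, _⟩ := prefix_struct (u := G) (v1 := List.replicate k HpAb.a)
        (v2 := d1 :: y1) (by rw [← hx1]; exact hpre) (by simpa using hlen.le)
      match u', hu1 with
      | [], hu1 => exfalso; have := congrArg List.length hu1; simp at this; omega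
      | e :: u'', hu1 =>
          have he : e = d1 := by
            have h2 : G <+: x := hpre
            rw [hx1, hu1] at h2
            have := (List.prefix_append_right_inj (List.replicate k HpAb.a)).mp h2
            exact (List.cons_prefix_cons.mp this).1
          constructor
          · exact ⟨d1, y1 ++ wbar HpAb.inv G, by rw [hx1]; simp, hd1⟩
          · refine ⟨d1.inv, x ++ wbar HpAb.inv u'', ?_, ?_⟩
            · rw [hu1, he, wbar_append, wbar_cons, wbar_replicate]
              have : HpAb.a.inv = HpAb.abar := rfl
              rw [this]
              simp [List.append_assoc]
            · rcases hd1 with rfl | rfl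
              · left; rfl
              · right; rfl


/-! ### INV holds along derivations -/

theorem INV_w {k : ℕ} : INV k (wHp k) := by
  constructor
  · refine ⟨HpAb.b, alHp k ++ wbar HpAb.inv (alHp k) ++ alHp k ++ [HpAb.c]
      ++ wbar HpAb.inv (alHp k), ?_, Or.inl rfl⟩
    simp [wHp, alHp, List.append_assoc]
  · refine ⟨HpAb.c, alHp k ++ [HpAb.b] ++ alHp k ++ wbar HpAb.inv (alHp k) ++ alHp k,
      ?_, Or.inr rfl⟩
    have : wbar HpAb.inv (alHp k) = List.replicate k HpAb.abar := by
      show wbar HpAb.inv (List.replicate k HpAb.a) = _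
      rw [wbar_replicate]
      rfl
    simp [wHp, this, List.append_assoc]

theorem suffix_forces_alpha {k : ℕ} {x γ α β : List HpAb} (hα : α.length = k)
    (hx : x = γ ++ α ++ β ++ wbar HpAb.inv α)
    (hI : INV k x) : α = List.replicate k HpAb.a := by
  obtain ⟨_, d2, y2, hx2, _⟩ := hI
  have h2 : (γ ++ α ++ β) ++ wbar HpAb.inv α = (y2 ++ [d2]) ++ List.replicate k HpAb.abar := by
    rw [← hx, hx2]; simp [List.append_assoc]
  have h3 : wbar HpAb.inv α = List.replicate k HpAb.abar :=
    (List.append_inj' h2 (by simp [wbar_length, hα])).2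
  have := congrArg (wbar HpAb.inv) h3
  rw [wbar_wbar, wbar_replicate] at this
  exact this

theorem prefix_forces_alpha {k : ℕ} {x α β : List HpAb} (hα : α.length = k)
    (hx : x = α ++ β) (hI : INV k x) : α = List.replicate k HpAb.a := by
  obtain ⟨⟨d1, y1, hx1, _⟩, _⟩ := hI
  have h2 : α ++ β = List.replicate k HpAb.a ++ d1 :: y1 := by rw [← hx, hx1]
  exact (List.append_inj h2 (by simp [hα])).1

theorem INV_iter {k : ℕ} (hk : 1 ≤ k) :
    ∀ (n : ℕ) (x : List HpAb), x ∈ HUIter HpAb.inv k ({wHp k} : Language HpAb) n →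
      INV k x := by
  intro n
  induction n with
  | zero => intro x hx; rw [Set.mem_singleton_iff.mp hx]; exact INV_w
  | succ n ih =>
      rintro z ⟨γ, α, β, hα, hz, hmem | hmem⟩
      · -- left extension : x = α ++ β ++ ᾱ ++ γ̄ ∈ previous
        set x := α ++ β ++ wbar HpAb.inv α ++ wbar HpAb.inv γ with hxdef
        have hIx := ih x hmem
        have hαa : α = List.replicate k HpAb.a :=
          prefix_forces_alpha (β := β ++ wbar HpAb.inv α ++ wbar HpAb.inv γ) hα
            (by rw [hxdef]; simp [List.append_assoc]) hIx
        have hwx : wbar HpAb.inv x = γ ++ List.replicate k HpAb.a ++ wbar HpAb.inv β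
            ++ List.replicate k HpAb.abar := by
          rw [hxdef, wbar_append, wbar_append, wbar_append, wbar_wbar, wbar_wbar, hαa,
            wbar_replicate]
          have : HpAb.a.inv = HpAb.abar := rfl
          rw [this]
          simp [List.append_assoc]
        have hstep := INV_stepR hk (INV_sym hIx) hwx
        have hzz : wbar HpAb.inv x ++ wbar HpAb.inv γ = wbar HpAb.inv z := by
          rw [hz, hxdef]
          simp [wbar_append, List.append_assoc]
        rw [hzz] at hstep
        have := INV_sym hstep
        rwa [wbar_wbar] at this
      · -- right extension : x = γ ++ α ++ β ++ ᾱ ∈ previous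
        set x := γ ++ α ++ β ++ wbar HpAb.inv α with hxdef
        have hIx := ih x hmem
        have hαa : α = List.replicate k HpAb.a := suffix_forces_alpha hα hxdef hIx
        have hx' : x = γ ++ List.replicate k HpAb.a ++ β ++ List.replicate k HpAb.abar := by
          rw [hxdef, hαa, wbar_replicate]; rfl
        have hstep := INV_stepR hk hIx hx'
        rwa [hz, show γ ++ α ++ β ++ wbar HpAb.inv α ++ wbar HpAb.inv γ
          = x ++ wbar HpAb.inv γ by rw [hxdef]]

/-! ### token shapes -/

def Lw : List HpAb := [.a, .b, .a, .abar, .a, .c, .abar]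
def Lwb : List HpAb := [.a, .cbar, .abar, .a, .abar, .bbar, .abar]
def Lv : List HpAb := [.a, .abar, .bbar, .abar]
def Lvb : List HpAb := [.a, .b, .a, .abar]

def F : ℕ → List HpAb
  | 0 => []
  | n + 1 => .bbar :: .abar :: F n

def G : ℕ → List HpAb
  | 0 => []
  | n + 1 => .a :: .b :: G n

@[simp] theorem F_zero : F 0 = [] := rfl
@[simp] theorem F_succ (n : ℕ) : F (n + 1) = .bbar :: .abar :: F n := rfl
@[simp] theorem G_zero : G 0 = [] := rfl
@[simp] theorem G_succ (n : ℕ) : G (n + 1) = .a :: .b :: G n := rfl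

theorem F_add (m n : ℕ) : F (m + n) = F m ++ F n := by
  induction m with
  | zero => simp
  | succ m ih => rw [show m + 1 + n = (m + n) + 1 by omega, F_succ, F_succ, ih]; rfl

theorem G_add (m n : ℕ) : G (m + n) = G m ++ G n := by
  induction m with
  | zero => simp
  | succ m ih => rw [show m + 1 + n = (m + n) + 1 by omega, G_succ, G_succ, ih]; rfl

@[simp] theorem F_len (n : ℕ) : (F n).length = 2 * n := by
  induction n with
  | zero => rfl
  | succ n ih => simp [F_succ, ih]; omega

@[simp] theorem G_len (n : ℕ) : (G n).length = 2 * n := by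
  induction n with
  | zero => rfl
  | succ n ih => simp [G_succ, ih]; omega

theorem G_snoc (n : ℕ) : G n ++ [.a, .b] = G (n + 1) := by
  induction n with
  | zero => rfl
  | succ n ih => rw [G_succ, List.cons_append, List.cons_append, ih]; rfl

theorem F_snoc (n : ℕ) : F n ++ [.bbar, .abar] = F (n + 1) := by
  induction n with
  | zero => rfl
  | succ n ih => rw [F_succ, List.cons_append, List.cons_append, ih]; rfl

theorem wbarT_F (n : ℕ) : wbar HpAb.inv (F n) = G n := by
  induction n with
  | zero => rfl
  | succ n ih =>
      rw [F_succ, wbar_cons, wbar_cons, ih]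
      have h1 : HpAb.bbar.inv = HpAb.b := rfl
      have h2 : HpAb.abar.inv = HpAb.a := rfl
      rw [h1, h2, List.append_assoc, ← G_snoc]
      rfl

theorem wbarT_G (n : ℕ) : wbar HpAb.inv (G n) = F n := by
  have := congrArg (wbar HpAb.inv) (wbarT_F n)
  rwa [wbar_wbar, eq_comm] at this

theorem wbarT_Lw : wbar HpAb.inv Lw = Lwb := by rfl
theorem wbarT_Lwb : wbar HpAb.inv Lwb = Lw := by rfl
theorem wbarT_Lv : wbar HpAb.inv Lv = Lvb := by rfl
theorem wbarT_Lvb : wbar HpAb.inv Lvb = Lv := by rfl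

/-! ### occurrence machinery -/

theorem occ_append {A B L1 L2 : List HpAb} {x y : HpAb}
    (h : A ++ B = L1 ++ x :: y :: L2) :
    (∃ L2', A = L1 ++ x :: y :: L2' ∧ L2 = L2' ++ B) ∨
    (A = L1 ++ [x] ∧ B = y :: L2) ∨
    (∃ L1', L1 = A ++ L1' ∧ B = L1' ++ x :: y :: L2) := by
  rcases List.append_eq_append_iff.mp h with ⟨a', h1, h2⟩ | ⟨c', h1, h2⟩
  · exact Or.inr (Or.inr ⟨a', h1, h2⟩)
  · match c', h1, h2 with
    | [], h1, h2 =>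
        exact Or.inr (Or.inr ⟨[], by simpa using h1.symm, by simpa using h2.symm⟩)
    | [x'], h1, h2 =>
        obtain ⟨hx, h2⟩ := List.cons_eq_cons.mp h2
        exact Or.inr (Or.inl ⟨by rw [h1, hx], h2.symm⟩)
    | x' :: y' :: c'', h1, h2 =>
        obtain ⟨hx, h2⟩ := List.cons_eq_cons.mp h2
        obtain ⟨hy, h2⟩ := List.cons_eq_cons.mp h2
        exact Or.inl ⟨c'', by rw [h1, hx, hy], by simpa using h2⟩

theorem occ_F : ∀ {n : ℕ} {L1 L2 : List HpAb} {d : HpAb},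
    (d = HpAb.bbar ∨ d = HpAb.c) → F n = L1 ++ d :: HpAb.abar :: L2 →
    ∃ j m, n = j + 1 + m ∧ L1 = F j ∧ d = HpAb.bbar ∧ L2 = F m := by
  intro n
  induction n with
  | zero => intro L1 L2 d _ h; simp [F_zero] at h
  | succ n ih =>
      intro L1 L2 d hd h
      rw [F_succ] at h
      match L1, h with
      | [], h =>
          obtain ⟨h1, h2⟩ := List.cons_eq_cons.mp h
          obtain ⟨-, h3⟩ := List.cons_eq_cons.mp h2
          exact ⟨0, n, by omega, rfl, h1.symm, h3.symm⟩
      | [x], h =>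
          exfalso
          obtain ⟨-, h2⟩ := List.cons_eq_cons.mp h
          obtain ⟨h3, -⟩ := List.cons_eq_cons.mp h2
          rcases hd with rfl | rfl <;> simp at h3
      | x :: y :: L1, h =>
          obtain ⟨hx, h2⟩ := List.cons_eq_cons.mp h
          obtain ⟨hy, h3⟩ := List.cons_eq_cons.mp h2
          obtain ⟨j, m, hn, hL1, hdd, hL2⟩ := ih hd h3
          exact ⟨j + 1, m, by omega, by rw [hL1, ← hx, ← hy]; rfl, hdd, hL2⟩

theorem mem_G : ∀ {n : ℕ} {x : HpAb}, x ∈ G n → x = HpAb.a ∨ x = HpAb.b := by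
  intro n
  induction n with
  | zero => intro x hx; simp [G_zero] at hx
  | succ n ih =>
      intro x hx
      rw [G_succ] at hx
      rcases hx with _ | ⟨_, hx⟩
      · exact Or.inl rfl
      · rcases hx with _ | ⟨_, hx⟩
        · exact Or.inr rfl
        · exact ih hx

theorem occ_G {n : ℕ} {L1 L2 : List HpAb} {d : HpAb}
    (hd : d = HpAb.bbar ∨ d = HpAb.c) (h : G n = L1 ++ d :: HpAb.abar :: L2) : False := by
  have : HpAb.abar ∈ G n := by rw [h]; simp
  rcases mem_G this with h | h <;> simp at h

theorem occ_Lw {L1 L2 : List HpAb} {d : HpAb}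
    (hd : d = HpAb.bbar ∨ d = HpAb.c) (h : Lw = L1 ++ d :: HpAb.abar :: L2) :
    L1 = [.a, .b, .a, .abar, .a] ∧ d = HpAb.c ∧ L2 = [] := by
  replace h := h.symm
  rcases hd with rfl | rfl <;>
  · rcases L1 with _|⟨x0,_|⟨x1,_|⟨x2,_|⟨x3,_|⟨x4,_|⟨x5,_|⟨x6,L1⟩⟩⟩⟩⟩⟩⟩ <;> simp_all [Lw]

theorem occ_Lwb {L1 L2 : List HpAb} {d : HpAb}
    (hd : d = HpAb.bbar ∨ d = HpAb.c) (h : Lwb = L1 ++ d :: HpAb.abar :: L2) :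
    L1 = [.a, .cbar, .abar, .a, .abar] ∧ d = HpAb.bbar ∧ L2 = [] := by
  replace h := h.symm
  rcases hd with rfl | rfl <;>
  · rcases L1 with _|⟨x0,_|⟨x1,_|⟨x2,_|⟨x3,_|⟨x4,_|⟨x5,_|⟨x6,L1⟩⟩⟩⟩⟩⟩⟩ <;> simp_all [Lwb]

theorem occ_Lv {L1 L2 : List HpAb} {d : HpAb}
    (hd : d = HpAb.bbar ∨ d = HpAb.c) (h : Lv = L1 ++ d :: HpAb.abar :: L2) :
    L1 = [.a, .abar] ∧ d = HpAb.bbar ∧ L2 = [] := by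
  replace h := h.symm
  rcases hd with rfl | rfl <;>
  · rcases L1 with _|⟨x0,_|⟨x1,_|⟨x2,_|⟨x3,L1⟩⟩⟩⟩ <;> simp_all [Lv]

theorem occ_Lvb {L1 L2 : List HpAb} {d : HpAb}
    (hd : d = HpAb.bbar ∨ d = HpAb.c) (h : Lvb = L1 ++ d :: HpAb.abar :: L2) : False := by
  replace h := h.symm
  rcases hd with rfl | rfl <;>
  · rcases L1 with _|⟨x0,_|⟨x1,_|⟨x2,_|⟨x3,L1⟩⟩⟩⟩ <;> simp_all [Lvb]

/-! ### prefix-comparison kill lemmas -/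

theorem F_false2 : ∀ {n m : ℕ} {P : List HpAb} {d : HpAb},
    (d = HpAb.bbar ∨ d = HpAb.c) → F m ++ P <+: F n ++ [d, HpAb.abar] →
    P.head? = some HpAb.a → False := by
  intro n
  induction n with
  | zero =>
      intro m P d hd h hP
      match m with
      | 0 =>
          simp only [F_zero, List.nil_append] at h
          match P, hP with
          | .a :: P, _ =>
              have := (List.cons_prefix_cons.mp h).1
              rcases hd with rfl | rfl <;> simp_all
      | m + 1 =>
          simp only [F_zero, F_succ, List.nil_append, List.cons_append] at h
          obtain ⟨h1, h2⟩ := List.cons_prefix_cons.mp h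
          rcases hd with rfl | rfl
          · obtain ⟨-, h3⟩ := List.cons_prefix_cons.mp h2
            have := h3.eq_of_length (by simpa using h3.length_le)
            match P, hP with
            | .a :: P, _ => simp at this
          · simp at h1
  | succ n ih =>
      intro m P d hd h hP
      match m with
      | 0 =>
          simp only [F_zero, F_succ, List.nil_append, List.cons_append] at h
          match P, hP with
          | .a :: P, _ =>
              have := (List.cons_prefix_cons.mp h).1
              simp at this
      | m + 1 =>
          simp only [F_succ, List.cons_append] at h
          obtain ⟨-, h2⟩ := List.cons_prefix_cons.mp h
          obtain ⟨-, h3⟩ := List.cons_prefix_cons.mp h2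
          exact ih hd h3 hP

theorem F_eq : ∀ {n m : ℕ} {P Q : List HpAb},
    F m ++ P <+: F n ++ Q → P.head? = some HpAb.a → Q.head? = some HpAb.a →
    m = n ∧ P <+: Q := by
  intro n
  induction n with
  | zero =>
      intro m P Q h hP hQ
      match m with
      | 0 => exact ⟨rfl, by simpa using h⟩
      | m + 1 =>
          simp only [F_zero, F_succ, List.nil_append, List.cons_append] at h
          match Q, hQ with
          | .a :: Q, _ =>
              have := (List.cons_prefix_cons.mp h).1
              simp at this
  | succ n ih =>
      intro m P Q h hP hQ
      match m with
      | 0 =>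
          simp only [F_zero, F_succ, List.nil_append, List.cons_append] at h
          match P, hP with
          | .a :: P, _ =>
              have := (List.cons_prefix_cons.mp h).1
              simp at this
      | m + 1 =>
          simp only [F_succ, List.cons_append] at h
          obtain ⟨-, h2⟩ := List.cons_prefix_cons.mp h
          obtain ⟨-, h3⟩ := List.cons_prefix_cons.mp h2
          obtain ⟨h4, h5⟩ := ih h3 hP hQ
          exact ⟨by omega, h5⟩

/-! ### the extraction lemma -/

theorem extract {k : ℕ} (hk : 1 ≤ k) {M x γ β : List HpAb}
    (hx : x = γ ++ List.replicate k HpAb.a ++ β ++ List.replicate k HpAb.abar)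
    (hxb : ∃ d y, x = y ++ d :: List.replicate k HpAb.abar ∧ (d = HpAb.bbar ∨ d = HpAb.c))
    (hz : dec k M = x ++ wbar HpAb.inv γ) :
    ∃ L1 L2 d, M = L1 ++ d :: HpAb.abar :: L2 ∧ (d = HpAb.bbar ∨ d = HpAb.c) ∧
      γ = dec k (wbar HpAb.inv L2) ∧ x = dec k (L1 ++ [d, HpAb.abar]) ∧
      wbar HpAb.inv L2 ++ [HpAb.a] <+: L1 ++ [d, HpAb.abar] := by
  obtain ⟨d, y, hxy, hd⟩ := hxb
  have hz' : dec k M = y ++ d :: (List.replicate k HpAb.abar ++ wbar HpAb.inv γ) := by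
    rw [hz, hxy]; simp [List.append_assoc]
  obtain ⟨L1, L2, hM, hy, hs⟩ := cut hk M hd hz'
  have hγ : γ = dec k (wbar HpAb.inv L2) := by
    rw [dec_wbar, ← hs, wbar_wbar]
  have hblkd : blk k d = [d] := by rcases hd with rfl | rfl <;> rfl
  have hxdec : x = dec k (L1 ++ [d, HpAb.abar]) := by
    rw [dec_append, ← hy, hxy, dec_cons, dec_cons, dec_nil, hblkd]
    have : blk k HpAb.abar = List.replicate k HpAb.abar := rfl
    rw [this]
    simp
  refine ⟨L1, L2, d, hM, hd, hγ, hxdec, ?_⟩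
  apply dec_prefix k hk
  rw [← hxdec]
  have hdec : dec k (wbar HpAb.inv L2 ++ [HpAb.a]) = γ ++ List.replicate k HpAb.a := by
    rw [dec_append, ← hγ, dec_cons, dec_nil]
    have : blk k HpAb.a = List.replicate k HpAb.a := rfl
    rw [this, List.append_nil]
  rw [hdec, hx]
  exact ⟨β ++ List.replicate k HpAb.abar, by simp [List.append_assoc]⟩

/-! ### shapes -/

def LC (a b : ℕ) : List HpAb := Lw ++ (F a ++ (Lv ++ (G b ++ Lwb)))
def LD (a b c : ℕ) : List HpAb :=
  Lw ++ (F a ++ (Lv ++ (G b ++ (Lwb ++ (G c ++ Lwb)))))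
def LCbar (a b : ℕ) : List HpAb := Lw ++ (F b ++ (Lvb ++ (G a ++ Lwb)))
def LDbar (a b c : ℕ) : List HpAb :=
  Lw ++ (F c ++ (Lw ++ (F b ++ (Lvb ++ (G a ++ Lwb)))))

theorem wbarT_LC (a b : ℕ) : wbar HpAb.inv (LC a b) = LCbar a b := by
  simp only [LC, LCbar, wbar_append, wbarT_F, wbarT_G, wbarT_Lw, wbarT_Lwb, wbarT_Lv,
    List.append_assoc]

theorem wbarT_LD (a b c : ℕ) : wbar HpAb.inv (LD a b c) = LDbar a b c := by
  simp only [LD, LDbar, wbar_append, wbarT_F, wbarT_G, wbarT_Lw, wbarT_Lwb, wbarT_Lv,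
    List.append_assoc]

theorem len_kill {L1 L2 : List HpAb} {d : HpAb}
    (hpref : wbar HpAb.inv L2 ++ [HpAb.a] <+: L1 ++ [d, HpAb.abar]) :
    L2.length + 1 ≤ L1.length + 2 := by
  have := hpref.length_le
  simpa [wbar_length] using this

/-! ### shape analysis : LC -/

theorem AN_C {k : ℕ} (hk : 1 ≤ k) {a b : ℕ} (ha : 1 ≤ a) (hb : 1 ≤ b)
    {γ β x : List HpAb}
    (hx : x = γ ++ List.replicate k HpAb.a ++ β ++ List.replicate k HpAb.abar)
    (hxb : ∃ d y, x = y ++ d :: List.replicate k HpAb.abar ∧ (d = HpAb.bbar ∨ d = HpAb.c))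
    (hz : dec k (LC a b) = x ++ wbar HpAb.inv γ) :
    γ = [] ∨ a = b := by
  obtain ⟨L1, L2, d, hM, hd, hγ, hxdec, hpref⟩ := extract hk hx hxb hz
  obtain ⟨a', rfl⟩ : ∃ a', a = a' + 1 := ⟨a - 1, by omega⟩
  obtain ⟨b', rfl⟩ : ∃ b', b = b' + 1 := ⟨b - 1, by omega⟩
  rw [LC] at hM
  rcases occ_append hM with ⟨L2', h1, h2⟩ | ⟨h1, h2⟩ | ⟨L1', h1, h2⟩
  · -- inside Lw : length kill
    exfalso
    obtain ⟨hL1, rfl, hL2'⟩ := occ_Lw hd h1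
    subst hL2'; subst hL1
    have := len_kill hpref
    rw [h2] at this
    simp [Lv, Lw, Lwb, F_len, G_len] at this
    omega
  · -- straddle Lw | F a
    exfalso
    rw [F_succ] at h2
    simp at h2
  rcases occ_append h2 with ⟨L2', h3, h4⟩ | ⟨h3, h4⟩ | ⟨L1'', h3, h4⟩
  · -- inside F a : kill by F_false2
    exfalso
    obtain ⟨j, m, hjm, hL1', rfl, hL2'⟩ := occ_F hd h3
    subst hL2'
    have hw : wbar HpAb.inv L2 = Lw ++ (F (b' + 1) ++ (Lvb ++ G m)) := by
      rw [h4]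
      simp only [wbar_append, wbarT_F, wbarT_G, wbarT_Lwb, wbarT_Lv, List.append_assoc]
    rw [hw, h1, hL1'] at hpref
    have hpref' : F (b' + 1) ++ (Lvb ++ (G m ++ [HpAb.a]))
        <+: F j ++ [HpAb.bbar, HpAb.abar] := by
      have := (List.prefix_append_right_inj Lw).mp (by
        simpa only [List.append_assoc] using hpref)
      simpa only [List.append_assoc] using this
    exact F_false2 (Or.inl rfl) hpref' rfl
  · -- straddle F a | Lv
    exfalso
    simp [Lv] at h4
  rcases occ_append h4 with ⟨L2', h5, h6⟩ | ⟨h5, h6⟩ | ⟨L1''', h5, h6⟩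
  · -- inside Lv : the good case
    obtain ⟨hL1'', rfl, hL2'⟩ := occ_Lv hd h5
    subst hL2'
    right
    have hw : wbar HpAb.inv L2 = Lw ++ F (b' + 1) := by
      rw [h6]
      simp only [List.nil_append, wbar_append, wbarT_G, wbarT_Lwb]
    rw [hw, h1, h3, hL1''] at hpref
    have hpref' : F (b' + 1) ++ [HpAb.a]
        <+: F (a' + 1) ++ [HpAb.a, HpAb.abar, HpAb.bbar, HpAb.abar] := by
      have := (List.prefix_append_right_inj Lw).mp (by
        simpa only [List.append_assoc] using hpref)
      simpa only [List.append_assoc, List.cons_append, List.nil_append] using this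
    have := F_eq hpref' rfl rfl
    omega
  · -- straddle Lv | G b
    exfalso
    rw [G_succ] at h6
    simp at h6
  rcases occ_append h6 with ⟨L2', h7, h8⟩ | ⟨h7, h8⟩ | ⟨L1'''', h7, h8⟩
  · exact absurd h7 (fun h => occ_G hd h)
  · -- straddle G b | Lwb
    exfalso
    simp [Lwb] at h8
  · -- inside Lwb : trivial step
    obtain ⟨hL1'''', rfl, hL2⟩ := occ_Lwb hd h8
    subst hL2
    left
    rw [hγ]
    rfl

/-! ### shape analysis : LCbar -/

theorem AN_Cbar {k : ℕ} (hk : 1 ≤ k) {a b : ℕ} (ha : 1 ≤ a) (hb : 1 ≤ b)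
    {γ β x : List HpAb}
    (hx : x = γ ++ List.replicate k HpAb.a ++ β ++ List.replicate k HpAb.abar)
    (hxb : ∃ d y, x = y ++ d :: List.replicate k HpAb.abar ∧ (d = HpAb.bbar ∨ d = HpAb.c))
    (hz : dec k (LCbar a b) = x ++ wbar HpAb.inv γ) :
    γ = [] := by
  obtain ⟨L1, L2, d, hM, hd, hγ, hxdec, hpref⟩ := extract hk hx hxb hz
  obtain ⟨a', rfl⟩ : ∃ a', a = a' + 1 := ⟨a - 1, by omega⟩
  obtain ⟨b', rfl⟩ : ∃ b', b = b' + 1 := ⟨b - 1, by omega⟩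
  rw [LCbar] at hM
  rcases occ_append hM with ⟨L2', h1, h2⟩ | ⟨h1, h2⟩ | ⟨L1', h1, h2⟩
  · -- inside Lw : length kill
    exfalso
    obtain ⟨hL1, rfl, hL2'⟩ := occ_Lw hd h1
    subst hL2'; subst hL1
    have := len_kill hpref
    rw [h2] at this
    simp [Lvb, Lw, Lwb, F_len, G_len] at this
    omega
  · exfalso; rw [F_succ] at h2; simp at h2
  rcases occ_append h2 with ⟨L2', h3, h4⟩ | ⟨h3, h4⟩ | ⟨L1'', h3, h4⟩
  · -- inside F b : kill by F_false2
    exfalso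
    obtain ⟨j, m, hjm, hL1', rfl, hL2'⟩ := occ_F hd h3
    subst hL2'
    have hw : wbar HpAb.inv L2 = Lw ++ (F (a' + 1) ++ (Lv ++ G m)) := by
      rw [h4]
      simp only [wbar_append, wbarT_F, wbarT_G, wbarT_Lwb, wbarT_Lvb, List.append_assoc]
    rw [hw, h1, hL1'] at hpref
    have hpref' : F (a' + 1) ++ (Lv ++ (G m ++ [HpAb.a]))
        <+: F j ++ [HpAb.bbar, HpAb.abar] := by
      have := (List.prefix_append_right_inj Lw).mp (by
        simpa only [List.append_assoc] using hpref)
      simpa only [List.append_assoc] using this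
    exact F_false2 (Or.inl rfl) hpref' rfl
  · exfalso; simp [Lvb] at h4
  rcases occ_append h4 with ⟨L2', h5, h6⟩ | ⟨h5, h6⟩ | ⟨L1''', h5, h6⟩
  · exact absurd h5 (fun h => occ_Lvb hd h)
  · exfalso; rw [G_succ] at h6; simp at h6
  rcases occ_append h6 with ⟨L2', h7, h8⟩ | ⟨h7, h8⟩ | ⟨L1'''', h7, h8⟩
  · exact absurd h7 (fun h => occ_G hd h)
  · exfalso; simp [Lwb] at h8
  · obtain ⟨hL1'''', rfl, hL2⟩ := occ_Lwb hd h8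
    subst hL2
    rw [hγ]
    rfl

/-! ### shape analysis : LD -/

theorem AN_D {k : ℕ} (hk : 1 ≤ k) {a b c : ℕ} (ha : 1 ≤ a) (hb : 1 ≤ b) (hc : 1 ≤ c)
    {γ β x : List HpAb}
    (hx : x = γ ++ List.replicate k HpAb.a ++ β ++ List.replicate k HpAb.abar)
    (hxb : ∃ d y, x = y ++ d :: List.replicate k HpAb.abar ∧ (d = HpAb.bbar ∨ d = HpAb.c))
    (hz : dec k (LD a b c) = x ++ wbar HpAb.inv γ) :
    γ = [] ∨ (c = a ∧ x = dec k (LC a b)) := by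
  obtain ⟨L1, L2, d, hM, hd, hγ, hxdec, hpref⟩ := extract hk hx hxb hz
  obtain ⟨a', rfl⟩ : ∃ a', a = a' + 1 := ⟨a - 1, by omega⟩
  obtain ⟨b', rfl⟩ : ∃ b', b = b' + 1 := ⟨b - 1, by omega⟩
  obtain ⟨c', rfl⟩ : ∃ c', c = c' + 1 := ⟨c - 1, by omega⟩
  rw [LD] at hM
  rcases occ_append hM with ⟨L2', h1, h2⟩ | ⟨h1, h2⟩ | ⟨L1', h1, h2⟩
  · -- inside Lw : length kill
    exfalso
    obtain ⟨hL1, rfl, hL2'⟩ := occ_Lw hd h1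
    subst hL2'; subst hL1
    have := len_kill hpref
    rw [h2] at this
    simp [Lv, Lw, Lwb, F_len, G_len] at this
    omega
  · exfalso; rw [F_succ] at h2; simp at h2
  rcases occ_append h2 with ⟨L2', h3, h4⟩ | ⟨h3, h4⟩ | ⟨L1'', h3, h4⟩
  · -- inside F a : kill by F_false2
    exfalso
    obtain ⟨j, m, hjm, hL1', rfl, hL2'⟩ := occ_F hd h3
    subst hL2'
    have hw : wbar HpAb.inv L2
        = Lw ++ (F (c' + 1) ++ (Lw ++ (F (b' + 1) ++ (Lvb ++ G m)))) := by
      rw [h4]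
      simp only [wbar_append, wbarT_F, wbarT_G, wbarT_Lwb, wbarT_Lv, List.append_assoc]
    rw [hw, h1, hL1'] at hpref
    have hpref' : F (c' + 1) ++ (Lw ++ (F (b' + 1) ++ (Lvb ++ (G m ++ [HpAb.a]))))
        <+: F j ++ [HpAb.bbar, HpAb.abar] := by
      have := (List.prefix_append_right_inj Lw).mp (by
        simpa only [List.append_assoc] using hpref)
      simpa only [List.append_assoc] using this
    exact F_false2 (Or.inl rfl) hpref' rfl
  · exfalso; simp [Lv] at h4
  rcases occ_append h4 with ⟨L2', h5, h6⟩ | ⟨h5, h6⟩ | ⟨L1''', h5, h6⟩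
  · -- inside Lv : killed via cons mismatch after F_eq
    exfalso
    obtain ⟨hL1''', rfl, hL2'⟩ := occ_Lv hd h5
    subst hL2'
    have hw : wbar HpAb.inv L2 = Lw ++ (F (c' + 1) ++ (Lw ++ F (b' + 1))) := by
      rw [h6]
      simp only [List.nil_append, wbar_append, wbarT_G, wbarT_Lwb, List.append_assoc]
    rw [hw, h1, h3, hL1'''] at hpref
    have hpref' : F (c' + 1) ++ (Lw ++ (F (b' + 1) ++ [HpAb.a]))
        <+: F (a' + 1) ++ [HpAb.a, HpAb.abar, HpAb.bbar, HpAb.abar] := by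
      have := (List.prefix_append_right_inj Lw).mp (by
        simpa only [List.append_assoc] using hpref)
      simpa only [List.append_assoc, List.cons_append, List.nil_append] using this
    obtain ⟨-, hbad⟩ := F_eq hpref' rfl rfl
    simp [Lw, List.cons_prefix_cons] at hbad
  · exfalso; rw [G_succ] at h6; simp at h6
  rcases occ_append h6 with ⟨L2', h7, h8⟩ | ⟨h7, h8⟩ | ⟨L1'''', h7, h8⟩
  · exact absurd h7 (fun h => occ_G hd h)
  · exfalso; simp [Lwb] at h8
  rcases occ_append h8 with ⟨L2', h9, h10⟩ | ⟨h9, h10⟩ | ⟨L1''''', h9, h10⟩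
  · -- inside first Lwb : the good case
    obtain ⟨hL1''''', rfl, hL2'⟩ := occ_Lwb hd h9
    subst hL2'
    right
    have hw : wbar HpAb.inv L2 = Lw ++ F (c' + 1) := by
      rw [h10]
      simp only [List.nil_append, wbar_append, wbarT_G, wbarT_Lwb]
    rw [hw, h1, h3, h5, h7, hL1'''''] at hpref
    have hpref' : F (c' + 1) ++ [HpAb.a] <+: F (a' + 1)
        ++ (Lv ++ (G (b' + 1) ++ [HpAb.a, HpAb.cbar, HpAb.abar, HpAb.a, HpAb.abar,
          HpAb.bbar, HpAb.abar])) := by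
      have := (List.prefix_append_right_inj Lw).mp (by
        simpa only [List.append_assoc] using hpref)
      simpa only [List.append_assoc, List.cons_append, List.nil_append] using this
    obtain ⟨hca, -⟩ := F_eq hpref' rfl rfl
    refine ⟨hca, ?_⟩
    rw [hxdec, h1, h3, h5, h7, hL1''''']
    rw [LC]
    congr 1
    simp [Lwb, List.append_assoc]
  · exfalso; rw [G_succ] at h10; simp at h10
  rcases occ_append h10 with ⟨L2', h11, h12⟩ | ⟨h11, h12⟩ | ⟨L1'''''', h11, h12⟩
  · exact absurd h11 (fun h => occ_G hd h)
  · exfalso; simp [Lwb] at h12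
  · obtain ⟨hL, rfl, hL2⟩ := occ_Lwb hd h12
    subst hL2
    left
    rw [hγ]
    rfl

/-! ### shape analysis : LDbar -/

theorem AN_Dbar {k : ℕ} (hk : 1 ≤ k) {a b c : ℕ} (ha : 1 ≤ a) (hb : 1 ≤ b) (hc : 1 ≤ c)
    {γ β x : List HpAb}
    (hx : x = γ ++ List.replicate k HpAb.a ++ β ++ List.replicate k HpAb.abar)
    (hxb : ∃ d y, x = y ++ d :: List.replicate k HpAb.abar ∧ (d = HpAb.bbar ∨ d = HpAb.c))
    (hz : dec k (LDbar a b c) = x ++ wbar HpAb.inv γ) :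
    γ = [] := by
  obtain ⟨L1, L2, d, hM, hd, hγ, hxdec, hpref⟩ := extract hk hx hxb hz
  obtain ⟨a', rfl⟩ : ∃ a', a = a' + 1 := ⟨a - 1, by omega⟩
  obtain ⟨b', rfl⟩ : ∃ b', b = b' + 1 := ⟨b - 1, by omega⟩
  obtain ⟨c', rfl⟩ : ∃ c', c = c' + 1 := ⟨c - 1, by omega⟩
  rw [LDbar] at hM
  rcases occ_append hM with ⟨L2', h1, h2⟩ | ⟨h1, h2⟩ | ⟨L1', h1, h2⟩
  · -- inside first Lw : length kill
    exfalso
    obtain ⟨hL1, rfl, hL2'⟩ := occ_Lw hd h1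
    subst hL2'; subst hL1
    have := len_kill hpref
    rw [h2] at this
    simp [Lvb, Lw, Lwb, F_len, G_len] at this
    omega
  · exfalso; rw [F_succ] at h2; simp at h2
  rcases occ_append h2 with ⟨L2', h3, h4⟩ | ⟨h3, h4⟩ | ⟨L1'', h3, h4⟩
  · -- inside F c : kill
    exfalso
    obtain ⟨j, m, hjm, hL1', rfl, hL2'⟩ := occ_F hd h3
    subst hL2'
    have hw : wbar HpAb.inv L2
        = Lw ++ (F (a' + 1) ++ (Lv ++ (G (b' + 1) ++ (Lwb ++ G m)))) := by
      rw [h4]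
      simp only [wbar_append, wbarT_F, wbarT_G, wbarT_Lwb, wbarT_Lw, wbarT_Lvb,
        List.append_assoc]
    rw [hw, h1, hL1'] at hpref
    have hpref' : F (a' + 1) ++ (Lv ++ (G (b' + 1) ++ (Lwb ++ (G m ++ [HpAb.a]))))
        <+: F j ++ [HpAb.bbar, HpAb.abar] := by
      have := (List.prefix_append_right_inj Lw).mp (by
        simpa only [List.append_assoc] using hpref)
      simpa only [List.append_assoc] using this
    exact F_false2 (Or.inl rfl) hpref' rfl
  · exfalso; simp [Lw] at h4
  rcases occ_append h4 with ⟨L2', h5, h6⟩ | ⟨h5, h6⟩ | ⟨L1''', h5, h6⟩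
  · -- inside second Lw : killed via cons mismatch after F_eq
    exfalso
    obtain ⟨hL1''', rfl, hL2'⟩ := occ_Lw hd h5
    subst hL2'
    have hw : wbar HpAb.inv L2 = Lw ++ (F (a' + 1) ++ (Lv ++ G (b' + 1))) := by
      rw [h6]
      simp only [List.nil_append, wbar_append, wbarT_F, wbarT_G, wbarT_Lwb, wbarT_Lvb,
        List.append_assoc]
    rw [hw, h1, h3, hL1'''] at hpref
    have hpref' : F (a' + 1) ++ (Lv ++ (G (b' + 1) ++ [HpAb.a]))
        <+: F (c' + 1) ++ [HpAb.a, HpAb.b, HpAb.a, HpAb.abar, HpAb.a, HpAb.c,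
          HpAb.abar] := by
      have := (List.prefix_append_right_inj Lw).mp (by
        simpa only [List.append_assoc] using hpref)
      simpa only [List.append_assoc, List.cons_append, List.nil_append] using this
    obtain ⟨-, hbad⟩ := F_eq hpref' rfl rfl
    simp [Lv, List.cons_prefix_cons] at hbad
  · exfalso; rw [F_succ] at h6; simp at h6
  rcases occ_append h6 with ⟨L2', h7, h8⟩ | ⟨h7, h8⟩ | ⟨L1'''', h7, h8⟩
  · -- inside F b : killed via cons mismatch after F_eq
    exfalso
    obtain ⟨j, m, hjm, hL1'''', rfl, hL2'⟩ := occ_F hd h7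
    subst hL2'
    have hw : wbar HpAb.inv L2 = Lw ++ (F (a' + 1) ++ (Lv ++ G m)) := by
      rw [h8]
      simp only [wbar_append, wbarT_F, wbarT_G, wbarT_Lwb, wbarT_Lvb, List.append_assoc]
    rw [hw, h1, h3, h5, hL1''''] at hpref
    have hpref' : F (a' + 1) ++ (Lv ++ (G m ++ [HpAb.a]))
        <+: F (c' + 1) ++ (Lw ++ (F j ++ [HpAb.bbar, HpAb.abar])) := by
      have := (List.prefix_append_right_inj Lw).mp (by
        simpa only [List.append_assoc] using hpref)
      simpa only [List.append_assoc] using this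
    obtain ⟨-, hbad⟩ := F_eq hpref' rfl rfl
    simp [Lv, Lw, List.cons_prefix_cons] at hbad
  · exfalso; simp [Lvb] at h8
  rcases occ_append h8 with ⟨L2', h9, h10⟩ | ⟨h9, h10⟩ | ⟨L1''''', h9, h10⟩
  · exact absurd h9 (fun h => occ_Lvb hd h)
  · exfalso; rw [G_succ] at h10; simp at h10
  rcases occ_append h10 with ⟨L2', h11, h12⟩ | ⟨h11, h12⟩ | ⟨L1'''''', h11, h12⟩
  · exact absurd h11 (fun h => occ_G hd h)
  · exfalso; simp [Lwb] at h12
  · obtain ⟨hL, rfl, hL2⟩ := occ_Lwb hd h12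
    subst hL2
    rw [hγ]
    rfl

/-! ### decoding of the concrete words -/

theorem alb_dec (k : ℕ) : wbar HpAb.inv (alHp k) = List.replicate k HpAb.abar := by
  show wbar HpAb.inv (List.replicate k HpAb.a) = _
  rw [wbar_replicate]
  rfl

theorem alb_dec' (k : ℕ) : wbar HpAb.inv (List.replicate k HpAb.a)
    = List.replicate k HpAb.abar := by
  rw [wbar_replicate]; rfl

theorem w_dec (k : ℕ) : wHp k = dec k Lw := by
  simp [wHp, alHp, alb_dec', Lw, dec, blk, List.append_assoc]

theorem v_dec (k : ℕ) : vHp k = dec k Lv := by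
  simp [vHp, alHp, alb_dec', Lv, dec, blk, List.append_assoc]

theorem wb_dec (k : ℕ) : wbar HpAb.inv (wHp k) = dec k Lwb := by
  rw [w_dec, ← dec_wbar, wbarT_Lw]

theorem u_dec (k : ℕ) : uHp k = dec k [HpAb.bbar, HpAb.abar] := by
  simp [uHp, alHp, alb_dec', dec, blk]

theorem ub_dec (k : ℕ) : wbar HpAb.inv (uHp k) = dec k [HpAb.a, HpAb.b] := by
  rw [u_dec, ← dec_wbar]
  rfl

theorem wpow_succ {S : Type} (u : List S) (n : ℕ) :
    wpow u (n + 1) = u ++ wpow u n := by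
  simp [wpow, List.replicate_succ]

theorem wpow_zero {S : Type} (u : List S) : wpow u 0 = [] := rfl

theorem wpowu_dec (k : ℕ) : ∀ n, wpow (uHp k) n = dec k (F n) := by
  intro n
  induction n with
  | zero => rfl
  | succ n ih => rw [wpow_succ, F_succ, ih, u_dec]; simp [dec]

theorem wpowub_dec (k : ℕ) : ∀ n, wpow (wbar HpAb.inv (uHp k)) n = dec k (G n) := by
  intro n
  induction n with
  | zero => rfl
  | succ n ih => rw [wpow_succ, G_succ, ih, ub_dec]; simp [dec]

theorem zform_dec (k r s t : ℕ) :
    wHp k ++ wpow (uHp k) r ++ vHp k ++ wpow (wbar HpAb.inv (uHp k)) s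
      ++ wbar HpAb.inv (wHp k) ++ wpow (wbar HpAb.inv (uHp k)) t
      ++ wbar HpAb.inv (wHp k) = dec k (LD r s t) := by
  rw [wb_dec, w_dec, v_dec, wpowu_dec, wpowub_dec, wpowub_dec, LD]
  simp [dec_append, List.append_assoc]

/-! ### the two backward claims -/

theorem ClaimC {k : ℕ} (hk : 1 ≤ k) :
    ∀ (n : ℕ) {a b : ℕ}, 1 ≤ a → 1 ≤ b →
    dec k (LC a b) ∈ HUIter HpAb.inv k ({wHp k} : Language HpAb) n → a = b := by
  intro n
  induction n with
  | zero =>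
      intro a b ha hb h
      exfalso
      have h2 : LC a b = Lw := dec_inj k hk (by
        rw [← w_dec]; exact Set.mem_singleton_iff.mp h)
      have := congrArg List.length h2
      simp [LC, Lw, Lv, Lwb, F_len, G_len] at this
  | succ n ih =>
      intro a b ha hb h
      obtain ⟨γ, α, β, hα, hz, hmem | hmem⟩ := h
      · -- left extension
        set x := α ++ β ++ wbar HpAb.inv α ++ wbar HpAb.inv γ with hxdef
        have hIx := INV_iter hk n x hmem
        have hαa : α = List.replicate k HpAb.a :=
          prefix_forces_alpha (β := β ++ wbar HpAb.inv α ++ wbar HpAb.inv γ) hα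
            (by rw [hxdef]; simp [List.append_assoc]) hIx
        have hwx : wbar HpAb.inv x = γ ++ List.replicate k HpAb.a ++ wbar HpAb.inv β
            ++ List.replicate k HpAb.abar := by
          rw [hxdef, wbar_append, wbar_append, wbar_append, wbar_wbar, wbar_wbar, hαa,
            wbar_replicate]
          have : HpAb.a.inv = HpAb.abar := rfl
          rw [this]
          simp [List.append_assoc]
        have hz' : dec k (LCbar a b) = wbar HpAb.inv x ++ wbar HpAb.inv γ := by
          rw [← wbarT_LC, dec_wbar, hz, hxdef]
          simp [wbar_append, List.append_assoc]
        have hγnil := AN_Cbar hk ha hb hwx (INV_sym hIx).2 hz'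
        subst hγnil
        apply ih ha hb
        rw [hz]
        simpa [hxdef, wbar_nil] using hmem
      · -- right extension
        set x := γ ++ α ++ β ++ wbar HpAb.inv α with hxdef
        have hIx := INV_iter hk n x hmem
        have hαa : α = List.replicate k HpAb.a := suffix_forces_alpha hα hxdef hIx
        have hx' : x = γ ++ List.replicate k HpAb.a ++ β ++ List.replicate k HpAb.abar := by
          rw [hxdef, hαa, wbar_replicate]; rfl
        have hz' : dec k (LC a b) = x ++ wbar HpAb.inv γ := by rw [hz, hxdef]
        rcases AN_C hk ha hb hx' hIx.2 hz' with hγnil | hab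
        · subst hγnil
          apply ih ha hb
          rw [hz]
          simpa [wbar_nil, hxdef] using hmem
        · exact hab

theorem ClaimD {k : ℕ} (hk : 1 ≤ k) :
    ∀ (n : ℕ) {a b c : ℕ}, 1 ≤ a → 1 ≤ b → 1 ≤ c →
    dec k (LD a b c) ∈ HUIter HpAb.inv k ({wHp k} : Language HpAb) n →
    a = b ∧ c = a := by
  intro n
  induction n with
  | zero =>
      intro a b c ha hb hc h
      exfalso
      have h2 : LD a b c = Lw := dec_inj k hk (by
        rw [← w_dec]; exact Set.mem_singleton_iff.mp h)
      have := congrArg List.length h2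
      simp [LD, Lw, Lv, Lwb, F_len, G_len] at this
  | succ n ih =>
      intro a b c ha hb hc h
      obtain ⟨γ, α, β, hα, hz, hmem | hmem⟩ := h
      · -- left extension
        set x := α ++ β ++ wbar HpAb.inv α ++ wbar HpAb.inv γ with hxdef
        have hIx := INV_iter hk n x hmem
        have hαa : α = List.replicate k HpAb.a :=
          prefix_forces_alpha (β := β ++ wbar HpAb.inv α ++ wbar HpAb.inv γ) hα
            (by rw [hxdef]; simp [List.append_assoc]) hIx
        have hwx : wbar HpAb.inv x = γ ++ List.replicate k HpAb.a ++ wbar HpAb.inv β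
            ++ List.replicate k HpAb.abar := by
          rw [hxdef, wbar_append, wbar_append, wbar_append, wbar_wbar, wbar_wbar, hαa,
            wbar_replicate]
          have : HpAb.a.inv = HpAb.abar := rfl
          rw [this]
          simp [List.append_assoc]
        have hz' : dec k (LDbar a b c) = wbar HpAb.inv x ++ wbar HpAb.inv γ := by
          rw [← wbarT_LD, dec_wbar, hz, hxdef]
          simp [wbar_append, List.append_assoc]
        have hγnil := AN_Dbar hk ha hb hc hwx (INV_sym hIx).2 hz'
        subst hγnil
        apply ih ha hb hc
        rw [hz]
        simpa [hxdef, wbar_nil] using hmem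
      · -- right extension
        set x := γ ++ α ++ β ++ wbar HpAb.inv α with hxdef
        have hIx := INV_iter hk n x hmem
        have hαa : α = List.replicate k HpAb.a := suffix_forces_alpha hα hxdef hIx
        have hx' : x = γ ++ List.replicate k HpAb.a ++ β ++ List.replicate k HpAb.abar := by
          rw [hxdef, hαa, wbar_replicate]; rfl
        have hz' : dec k (LD a b c) = x ++ wbar HpAb.inv γ := by rw [hz, hxdef]
        rcases AN_D hk ha hb hc hx' hIx.2 hz' with hγnil | ⟨hca, hxC⟩
        · subst hγnil
          apply ih ha hb hc
          rw [hz]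
          simpa [wbar_nil, hxdef] using hmem
        · refine ⟨ClaimC hk n ha hb ?_, hca⟩
          rw [← hxC]
          exact hmem

/-! ### the forward derivation -/

theorem stepR {k : ℕ} (hk : 1 ≤ k) {L : Language HpAb} {n : ℕ} {P M : List HpAb}
    (h : dec k (P ++ [HpAb.a] ++ M ++ [HpAb.abar]) ∈ HUIter HpAb.inv k L n) :
    dec k (P ++ [HpAb.a] ++ M ++ [HpAb.abar] ++ wbar HpAb.inv P)
      ∈ HUIter HpAb.inv k L (n + 1) := by
  refine ⟨dec k P, List.replicate k HpAb.a, dec k M, by simp, ?_, Or.inr ?_⟩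
  · have hrep : blk k HpAb.a = List.replicate k HpAb.a := rfl
    have hrepb : blk k HpAb.abar = List.replicate k HpAb.abar := rfl
    have hwa : wbar HpAb.inv (List.replicate k HpAb.a) = List.replicate k HpAb.abar := by
      rw [wbar_replicate]; rfl
    rw [dec_append, dec_append, dec_append, dec_append, dec_wbar, hwa]
    simp [dec, hrep, hrepb, List.append_assoc]
  · have hrep : blk k HpAb.a = List.replicate k HpAb.a := rfl
    have hrepb : blk k HpAb.abar = List.replicate k HpAb.abar := rfl
    have hwa : wbar HpAb.inv (List.replicate k HpAb.a) = List.replicate k HpAb.abar := by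
      rw [wbar_replicate]; rfl
    have : dec k (P ++ [HpAb.a] ++ M ++ [HpAb.abar])
        = dec k P ++ List.replicate k HpAb.a ++ dec k M
          ++ wbar HpAb.inv (List.replicate k HpAb.a) := by
      rw [hwa, dec_append, dec_append, dec_append]
      simp [dec, hrep, hrepb]
    rw [← this]
    exact h

theorem der1 {k : ℕ} (hk : 1 ≤ k) :
    ∀ r, dec k (Lw ++ F r) ∈ HUIter HpAb.inv k ({wHp k} : Language HpAb) r := by
  intro r
  induction r with
  | zero =>
      show dec k (Lw ++ F 0) ∈ ({wHp k} : Language HpAb)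
      rw [F_zero, List.append_nil, ← w_dec]
      rfl
  | succ r ih =>
      have heq : Lw ++ F (r + 1) = Lw ++ F r ++ [HpAb.bbar, HpAb.abar] := by
        rw [List.append_assoc, F_snoc]
      match r, ih with
      | 0, ih =>
          have h0 : Lw ++ F 0 = [HpAb.a, HpAb.b] ++ [HpAb.a]
              ++ [HpAb.abar, HpAb.a, HpAb.c] ++ [HpAb.abar] := by rfl
          have := stepR hk (P := [HpAb.a, HpAb.b]) (M := [HpAb.abar, HpAb.a, HpAb.c])
            (by rw [← h0]; exact ih)
          have hw : wbar HpAb.inv [HpAb.a, HpAb.b] = [HpAb.bbar, HpAb.abar] := rfl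
          rw [hw] at this
          rw [heq]
          rw [show (Lw ++ F 0 : List HpAb) ++ [HpAb.bbar, HpAb.abar]
            = [HpAb.a, HpAb.b] ++ [HpAb.a] ++ [HpAb.abar, HpAb.a, HpAb.c] ++ [HpAb.abar]
              ++ [HpAb.bbar, HpAb.abar] by rw [← h0]]
          exact this
      | r + 1, ih =>
          have h0 : Lw ++ F (r + 1) = [HpAb.a, HpAb.b] ++ [HpAb.a]
              ++ ([HpAb.abar, HpAb.a, HpAb.c, HpAb.abar] ++ F r ++ [HpAb.bbar])
              ++ [HpAb.abar] := by
            rw [← F_snoc]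
            simp [Lw, List.append_assoc]
          have := stepR hk (P := [HpAb.a, HpAb.b])
            (M := [HpAb.abar, HpAb.a, HpAb.c, HpAb.abar] ++ F r ++ [HpAb.bbar])
            (by rw [← h0]; exact ih)
          have hw : wbar HpAb.inv [HpAb.a, HpAb.b] = [HpAb.bbar, HpAb.abar] := rfl
          rw [hw] at this
          rw [heq, show (Lw ++ F (r + 1) : List HpAb) ++ [HpAb.bbar, HpAb.abar]
            = [HpAb.a, HpAb.b] ++ [HpAb.a]
              ++ ([HpAb.abar, HpAb.a, HpAb.c, HpAb.abar] ++ F r ++ [HpAb.bbar])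
              ++ [HpAb.abar] ++ [HpAb.bbar, HpAb.abar] by rw [← h0]]
          exact this

theorem der_final {k : ℕ} (hk : 1 ≤ k) (r : ℕ) (hr : 1 ≤ r) :
    dec k (LD r r r) ∈ HUIter HpAb.inv k ({wHp k} : Language HpAb) (r + 3) := by
  obtain ⟨r', rfl⟩ : ∃ r', r = r' + 1 := ⟨r - 1, by omega⟩
  -- step 2 : append v
  have h1 : Lw ++ F (r' + 1) = [HpAb.a, HpAb.b, HpAb.a, HpAb.abar] ++ [HpAb.a]
      ++ ([HpAb.c, HpAb.abar] ++ F r' ++ [HpAb.bbar]) ++ [HpAb.abar] := by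
    rw [← F_snoc]
    simp [Lw, List.append_assoc]
  have hd2 := stepR hk (P := [HpAb.a, HpAb.b, HpAb.a, HpAb.abar])
    (M := [HpAb.c, HpAb.abar] ++ F r' ++ [HpAb.bbar])
    (by rw [← h1]; exact der1 hk (r' + 1))
  have hw2 : wbar HpAb.inv [HpAb.a, HpAb.b, HpAb.a, HpAb.abar] = Lv := rfl
  rw [hw2, ← h1] at hd2
  -- hd2 : dec (Lw ++ F r ++ Lv) ∈ It (r+1)
  have h3 : Lw ++ F (r' + 1) ++ Lv = (Lw ++ F (r' + 1)) ++ [HpAb.a]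
      ++ [HpAb.abar, HpAb.bbar] ++ [HpAb.abar] := by
    simp [Lv, List.append_assoc]
  have hd3 := stepR hk (P := Lw ++ F (r' + 1)) (M := [HpAb.abar, HpAb.bbar])
    (by rw [← h3]; exact hd2)
  have hw3 : wbar HpAb.inv (Lw ++ F (r' + 1)) = G (r' + 1) ++ Lwb := by
    rw [wbar_append, wbarT_F, wbarT_Lw]
  rw [hw3, ← h3] at hd3
  -- hd3 : dec (Lw ++ F r ++ Lv ++ (G r ++ Lwb)) ∈ It (r+2)
  have h4 : Lw ++ F (r' + 1) ++ Lv ++ (G (r' + 1) ++ Lwb) = (Lw ++ F (r' + 1)) ++ [HpAb.a]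
      ++ ([HpAb.abar, HpAb.bbar, HpAb.abar] ++ G (r' + 1)
        ++ [HpAb.a, HpAb.cbar, HpAb.abar, HpAb.a, HpAb.abar, HpAb.bbar]) ++ [HpAb.abar] := by
    simp [Lv, Lwb, List.append_assoc]
  have hd4 := stepR hk (P := Lw ++ F (r' + 1))
    (M := [HpAb.abar, HpAb.bbar, HpAb.abar] ++ G (r' + 1)
      ++ [HpAb.a, HpAb.cbar, HpAb.abar, HpAb.a, HpAb.abar, HpAb.bbar])
    (by rw [← h4]; exact hd3)
  rw [hw3, ← h4] at hd4
  have h5 : Lw ++ F (r' + 1) ++ Lv ++ (G (r' + 1) ++ Lwb) ++ (G (r' + 1) ++ Lwb)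
      = LD (r' + 1) (r' + 1) (r' + 1) := by
    simp [LD, List.append_assoc]
  rw [h5] at hd4
  exact hd4

end HpAux

/-- With `R = w·u⁺·v·ū⁺·w̄·ū⁺·w̄`, the intersection of `R` with the iterated
unbounded two-sided `k`-hairpin completion of `{w}` is
`{ w u^r v ū^r w̄ ū^r w̄ : r ≥ 1 }`. -/
theorem inter_HUStar_eq (k : ℕ) (hk : 1 ≤ k) :
    ({z | ∃ r s t : ℕ, 1 ≤ r ∧ 1 ≤ s ∧ 1 ≤ t ∧
        z = wHp k ++ wpow (uHp k) r ++ vHp k ++ wpow (wbar HpAb.inv (uHp k)) s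
          ++ wbar HpAb.inv (wHp k) ++ wpow (wbar HpAb.inv (uHp k)) t
          ++ wbar HpAb.inv (wHp k)} : Language HpAb)
      ⊓ HUStar HpAb.inv k ({wHp k} : Language HpAb) =
    {z | ∃ r : ℕ, 1 ≤ r ∧
        z = wHp k ++ wpow (uHp k) r ++ vHp k ++ wpow (wbar HpAb.inv (uHp k)) r
          ++ wbar HpAb.inv (wHp k) ++ wpow (wbar HpAb.inv (uHp k)) r
          ++ wbar HpAb.inv (wHp k)} := by
  ext z
  constructor
  · rintro ⟨⟨r, s, t, hr, hs, ht, hzeq⟩, n, hmem⟩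
    rw [hzeq, HpAux.zform_dec] at hmem
    obtain ⟨hrs, htr⟩ := HpAux.ClaimD hk n hr hs ht hmem
    subst hrs
    exact ⟨r, hr, by rw [hzeq, htr]⟩
  · rintro ⟨r, hr, hzeq⟩
    refine ⟨⟨r, r, r, hr, hr, hr, hzeq⟩, r + 3, ?_⟩
    rw [hzeq, HpAux.zform_dec]
    exact HpAux.der_final hk r hr
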